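/- There exists a constant C₀ > 0 such that for all t ∈ ℝ, |sinc(t/(2ℏ))| ≥ C₀ (1 + |t|)⁻¹ · dist(t, Z₀), where Z₀ = {2πkℏ : k ∈ ℤ, k ≠ 0} and sinc(s) = sin s / s (with sinc(0) = 1). -/

import Mathlib

open Real Metric

noncomputable def sinc (t : ℝ) : ℝ := if t = 0 then 1 else Real.sin t / t

theorem sinc_lower_bound (ℏ : ℝ) (hℏ : 0 < ℏ) :
    ∃ C₀ > 0, ∀ t : ℝ,
      |_root_.sinc (t / (2 * ℏ))| ≥
        C₀ * (1 + |t|)⁻¹ * Metric.infDist t {s : ℝ | ∃ k : ℤ, k ≠ 0 ∧ s = 2 * π * (k : ℝ) * ℏ} := by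
  have hπ := Real.pi_pos
  set Z : Set ℝ := {s : ℝ | ∃ k : ℤ, k ≠ 0 ∧ s = 2 * π * (k : ℝ) * ℏ} with hZ
  set C₀ : ℝ := min (2 / π) (2 / (3 * π ^ 2 * ℏ)) with hC₀
  have hC₀pos : 0 < C₀ := by
    apply lt_min <;> positivity
  refine ⟨C₀, hC₀pos, fun t => ?_⟩
  have hd0 : 0 ≤ Metric.infDist t Z := Metric.infDist_nonneg
  set x : ℝ := t / (2 * ℏ) with hx
  have h2ℏ : (0:ℝ) < 2 * ℏ := by linarith
  have habsx : |x| = |t| / (2 * ℏ) := by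
    rw [hx, abs_div, abs_of_pos h2ℏ]
  by_cases ht : |t| ≤ π * ℏ
  · -- small t regime
    have hmem : (2 * π * ((1:ℤ):ℝ) * ℏ) ∈ Z := ⟨1, one_ne_zero, rfl⟩
    have hd : Metric.infDist t Z ≤ 3 * π * ℏ := by
      refine (Metric.infDist_le_dist_of_mem hmem).trans ?_
      rw [Real.dist_eq]
      have h1 : |t - 2 * π * ((1:ℤ):ℝ) * ℏ| ≤ |t| + |2 * π * ((1:ℤ):ℝ) * ℏ| :=
        abs_sub _ _
      have h2 : |2 * π * ((1:ℤ):ℝ) * ℏ| = 2 * π * ℏ := by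
        push_cast
        rw [abs_of_pos (by positivity)]
        ring
      rw [h2] at h1
      linarith
    have hxle : |x| ≤ π / 2 := by
      rw [habsx, div_le_iff₀ h2ℏ]
      nlinarith
    have hlhs : 2 / π ≤ |_root_.sinc x| := by
      by_cases hx0 : x = 0
      · rw [_root_.sinc, if_pos hx0, abs_one]
        rw [div_le_one hπ]
        linarith [Real.two_le_pi]
      · have hj := Real.mul_abs_le_abs_sin hxle
        rw [_root_.sinc, if_neg hx0, abs_div, le_div_iff₀ (abs_pos.2 hx0)]
        linarith
    have hrhs : C₀ * (1 + |t|)⁻¹ * Metric.infDist t Z ≤ 2 / π := by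
      have hinv : (1 + |t|)⁻¹ ≤ 1 := inv_le_one_of_one_le₀ (by linarith [abs_nonneg t])
      have : C₀ * (1 + |t|)⁻¹ * Metric.infDist t Z ≤
          (2 / (3 * π ^ 2 * ℏ)) * 1 * (3 * π * ℏ) :=
        mul_le_mul (mul_le_mul (min_le_right _ _) hinv (by positivity) (by positivity))
          hd hd0 (by positivity)
      calc C₀ * (1 + |t|)⁻¹ * Metric.infDist t Z ≤
            (2 / (3 * π ^ 2 * ℏ)) * 1 * (3 * π * ℏ) := this
        _ = 2 / π := by field_simp
    exact le_trans hrhs hlhs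
  · -- large t regime
    push_neg at ht
    have htpos : 0 < |t| := lt_trans (by positivity) ht
    have ht0 : t ≠ 0 := by simpa using htpos.ne'
    have hx0 : x ≠ 0 := by
      rw [hx]
      exact div_ne_zero ht0 h2ℏ.ne'
    set k : ℤ := round (x / π) with hk
    have hround : |x / π - (k:ℝ)| ≤ 1 / 2 := abs_sub_round (x / π)
    have hxπ : 1 / 2 < |x / π| := by
      rw [abs_div, abs_of_pos hπ, lt_div_iff₀ hπ, habsx, lt_div_iff₀ h2ℏ]
      nlinarith
    have hkne : k ≠ 0 := by
      intro h
      rw [h] at hround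
      push_cast at hround
      rw [sub_zero] at hround
      linarith
    have hmem : (2 * π * (k:ℝ) * ℏ) ∈ Z := ⟨k, hkne, rfl⟩
    have hr : |x - (k:ℝ) * π| ≤ π / 2 := by
      have heq : x - (k:ℝ) * π = π * (x / π - (k:ℝ)) := by
        field_simp
      rw [heq, abs_mul, abs_of_pos hπ]
      calc π * |x / π - (k:ℝ)| ≤ π * (1/2) := by
            exact mul_le_mul_of_nonneg_left hround hπ.le
        _ = π / 2 := by ring
    have hsin : 2 / π * |x - (k:ℝ) * π| ≤ |Real.sin x| := by
      have heq : Real.sin x = (-1) ^ k * Real.sin (x - (k:ℝ) * π) := by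
        conv_lhs => rw [show x = (x - (k:ℝ) * π) + (k:ℝ) * π by ring]
        exact Real.sin_add_int_mul_pi _ k
      have habs : |Real.sin x| = |Real.sin (x - (k:ℝ) * π)| := by
        rw [heq, abs_mul]
        rcases Int.even_or_odd k with he | ho
        · rw [he.neg_one_zpow, abs_one, one_mul]
        · rw [ho.neg_one_zpow, abs_neg, abs_one, one_mul]
      rw [habs]
      exact Real.mul_abs_le_abs_sin hr
    have hd : Metric.infDist t Z ≤ 2 * ℏ * |x - (k:ℝ) * π| := by
      refine (Metric.infDist_le_dist_of_mem hmem).trans ?_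
      rw [Real.dist_eq]
      have : t - 2 * π * (k:ℝ) * ℏ = 2 * ℏ * (x - (k:ℝ) * π) := by
        rw [hx]; field_simp
      rw [this, abs_mul, abs_of_pos h2ℏ]
    have hinv : (1 + |t|)⁻¹ ≤ |t|⁻¹ := by
      apply inv_anti₀ htpos
      linarith
    have key : C₀ * (1 + |t|)⁻¹ * Metric.infDist t Z ≤
        (2 / π) * |t|⁻¹ * (2 * ℏ * |x - (k:ℝ) * π|) :=
      mul_le_mul (mul_le_mul (min_le_left _ _) hinv (by positivity) (by positivity))
        hd hd0 (by positivity)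
    have hsincval : |_root_.sinc x| = |Real.sin x| / |x| := by
      rw [_root_.sinc, if_neg hx0, abs_div]
    have final : (2 / π) * |t|⁻¹ * (2 * ℏ * |x - (k:ℝ) * π|) ≤ |_root_.sinc x| := by
      rw [hsincval, habsx, div_div_eq_mul_div, le_div_iff₀ htpos]
      have h1 : 2 / π * |t|⁻¹ * (2 * ℏ * |x - (k:ℝ) * π|) * |t| =
          (2 / π * |x - (k:ℝ) * π|) * (2 * ℏ) := by
        field_simp
      rw [h1]
      exact mul_le_mul_of_nonneg_right hsin h2ℏ.le
    exact le_trans key final
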